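/- The solvable group Γ = ℤ² ⋊_A ℤ, where the generator of ℤ acts on ℤ² by the matrix A = [[2,1],[1,1]], is not presentable by a product: there do not exist elementwise-commuting infinite subgroups Γ₁, Γ₂ ⊆ Γ whose union generates a finite-index subgroup of Γ. -/

import Mathlib

def PresentableByProduct (G : Type*) [Group G] : Prop :=
  ∃ G₁ G₂ : Subgroup G, (G₁ : Set G).Infinite ∧ (G₂ : Set G).Infinite ∧
    (∀ g₁ ∈ G₁, ∀ g₂ ∈ G₂, g₁ * g₂ = g₂ * g₁) ∧
    (Subgroup.closure ((G₁ : Set G) ∪ (G₂ : Set G))).FiniteIndex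

section Stmt8Aux
open Matrix

private def MM : Matrix (Fin 2) (Fin 2) ℤ := !![2,1;1,1]

lemma MM_sq : MM * MM = (3:ℤ) • MM - 1 := by
  norm_num [MM, Matrix.mul_fin_two, Matrix.one_fin_two, Matrix.smul_of, Matrix.smul_cons]
  ext i j
  fin_cases i <;> fin_cases j <;> simp

lemma trace_rec (n : ℕ) : (MM^(n+2)).trace = 3 * (MM^(n+1)).trace - (MM^n).trace := by
  have h : MM^(n+2) = (3:ℤ) • MM^(n+1) - MM^n := by
    calc MM^(n+2) = MM^n * (MM*MM) := by rw [pow_succ, pow_succ, mul_assoc]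
    _ = MM^n * ((3:ℤ)•MM - 1) := by rw [MM_sq]
    _ = (3:ℤ) • (MM^n * MM) - MM^n * 1 := by rw [mul_sub, mul_smul_comm]
    _ = (3:ℤ) • MM^(n+1) - MM^n := by rw [mul_one, pow_succ]
  rw [h, Matrix.trace_sub, Matrix.trace_smul]
  simp [smul_eq_mul]

lemma trace_grow (n : ℕ) : 2 ≤ (MM^n).trace ∧ (MM^n).trace + 1 ≤ (MM^(n+1)).trace := by
  induction n with
  | zero => norm_num [Matrix.trace_fin_two, MM, Matrix.trace_one]
  | succ n ih =>
    have h := trace_rec n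
    exact ⟨by linarith [ih.1, ih.2], by linarith [ih.1, ih.2]⟩

lemma trace_ge (n : ℕ) (h : n ≠ 0) : 3 ≤ (MM^n).trace := by
  obtain ⟨m, rfl⟩ := Nat.exists_eq_succ_of_ne_zero h
  have h1 := (trace_grow m).1
  have h2 := (trace_grow m).2
  linarith

lemma det_sub_one (n : ℕ) (hn : n ≠ 0) : (MM^n - 1).det ≠ 0 := by
  have h1 : (MM^n).det = 1 := by
    rw [Matrix.det_pow]
    norm_num [MM, Matrix.det_fin_two_of]
  have h2 := trace_ge n hn
  have h3 : (MM^n - 1).det = (MM^n).det - (MM^n).trace + 1 := by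
    rw [Matrix.det_fin_two, Matrix.det_fin_two, Matrix.trace_fin_two]
    simp [Matrix.sub_apply, Matrix.one_apply]
    ring
  rw [Matrix.trace_fin_two] at h3
  rw [Matrix.trace_fin_two] at h2
  omega

lemma fixed_nat (n : ℕ) (hn : n ≠ 0) (v : Fin 2 → ℤ) (h : (MM^n).mulVec v = v) : v = 0 := by
  apply Matrix.eq_zero_of_mulVec_eq_zero (det_sub_one n hn)
  rw [Matrix.sub_mulVec, Matrix.one_mulVec, h, sub_self]

lemma coe_pow (A : GL (Fin 2) ℤ) (n : ℕ) :
    ((A ^ n : GL (Fin 2) ℤ) : Matrix (Fin 2) (Fin 2) ℤ) = (A : Matrix (Fin 2) (Fin 2) ℤ)^n := by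
  exact Units.val_pow_eq_pow_val A n

lemma fixed_int (A : GL (Fin 2) ℤ) (hA : (A : Matrix (Fin 2) (Fin 2) ℤ) = MM)
    (k : ℤ) (hk : k ≠ 0) (v : Fin 2 → ℤ)
    (h : ((A ^ k : GL (Fin 2) ℤ) : Matrix (Fin 2) (Fin 2) ℤ).mulVec v = v) : v = 0 := by
  have main : ∀ n : ℕ, n ≠ 0 → ∀ w : Fin 2 → ℤ,
      ((A ^ n : GL (Fin 2) ℤ) : Matrix (Fin 2) (Fin 2) ℤ).mulVec w = w → w = 0 := by
    intro n hn w hw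
    apply fixed_nat n hn
    rwa [coe_pow, hA] at hw
  rcases lt_trichotomy k 0 with hneg | rfl | hpos
  · set n : ℕ := (-k).toNat with hn
    have hkn : k = -(n : ℤ) := by omega
    have hB : A ^ k = (A ^ n)⁻¹ := by rw [hkn, _root_.zpow_neg, zpow_natCast]
    rw [hB] at h
    have h2 := congrArg (fun w => (((A ^ n : GL (Fin 2) ℤ) : Matrix (Fin 2) (Fin 2) ℤ)).mulVec w) h
    simp only [Matrix.mulVec_mulVec] at h2
    have h3 : ((A ^ n : GL (Fin 2) ℤ) : Matrix (Fin 2) (Fin 2) ℤ) *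
        (((A ^ n)⁻¹ : GL (Fin 2) ℤ) : Matrix (Fin 2) (Fin 2) ℤ) = 1 := Units.mul_inv _
    rw [h3, Matrix.one_mulVec] at h2
    exact main n (by omega) v h2.symm
  · exact absurd rfl hk
  · have : A ^ k = A ^ (k.toNat) := by rw [← zpow_natCast]; congr 1; omega
    rw [this] at h
    exact main k.toNat (by omega) v h

lemma key_lemma (A : GL (Fin 2) ℤ)
    (hA : (A : Matrix (Fin 2) (Fin 2) ℤ) = MM)
    (φ : Multiplicative ℤ →* MulAut (Multiplicative (Fin 2 → ℤ)))
    (hφ : ∀ (k : ℤ) (v : Fin 2 → ℤ),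
      φ (Multiplicative.ofAdd k) (Multiplicative.ofAdd v)
        = Multiplicative.ofAdd
            (((A ^ k : GL (Fin 2) ℤ) : Matrix (Fin 2) (Fin 2) ℤ).mulVec v))
    (g₁ g₂ : (Multiplicative (Fin 2 → ℤ)) ⋊[φ] Multiplicative ℤ)
    (h : g₁ * g₂ = g₂ * g₁) (hk : g₂.right = 1) (hm : g₁.right ≠ 1) : g₂.left = 1 := by
  have hl := congrArg SemidirectProduct.left h
  rw [SemidirectProduct.mul_left, SemidirectProduct.mul_left, hk, _root_.map_one] at hl
  -- hl : g₁.left * φ g₁.right g₂.left = g₂.left * (1 : MulAut _) g₁.left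
  have hφ' : φ g₁.right g₂.left =
      Multiplicative.ofAdd
        (((A ^ (Multiplicative.toAdd g₁.right) : GL (Fin 2) ℤ) : Matrix (Fin 2) (Fin 2) ℤ).mulVec
          (Multiplicative.toAdd g₂.left)) := by
    have := hφ (Multiplicative.toAdd g₁.right) (Multiplicative.toAdd g₂.left)
    simpa using this
  rw [hφ'] at hl
  have hl2 := congrArg Multiplicative.toAdd hl
  simp only [toAdd_mul, toAdd_ofAdd, MulAut.one_apply] at hl2
  -- hl2 : toAdd g₁.left + mulVec ... = toAdd g₂.left + toAdd g₁.left
  have heq : ((A ^ (Multiplicative.toAdd g₁.right) : GL (Fin 2) ℤ) : Matrix (Fin 2) (Fin 2) ℤ).mulVec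
      (Multiplicative.toAdd g₂.left) = Multiplicative.toAdd g₂.left := by
    have := hl2
    rw [add_comm (Multiplicative.toAdd g₂.left) (Multiplicative.toAdd g₁.left)] at this
    exact add_left_cancel this
  have hm' : Multiplicative.toAdd g₁.right ≠ 0 := by
    intro h0
    exact hm (by rw [← ofAdd_toAdd g₁.right, h0, ofAdd_zero])
  have := fixed_int A hA _ hm' _ heq
  rw [← ofAdd_toAdd g₂.left, this, ofAdd_zero]

end Stmt8Aux

theorem stmt_8 (A : GL (Fin 2) ℤ)
    (hA : (A : Matrix (Fin 2) (Fin 2) ℤ) = !![2, 1; 1, 1])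
    (φ : Multiplicative ℤ →* MulAut (Multiplicative (Fin 2 → ℤ)))
    (hφ : ∀ (k : ℤ) (v : Fin 2 → ℤ),
      φ (Multiplicative.ofAdd k) (Multiplicative.ofAdd v)
        = Multiplicative.ofAdd
            (((A ^ k : GL (Fin 2) ℤ) : Matrix (Fin 2) (Fin 2) ℤ).mulVec v)) :
    ¬ PresentableByProduct ((Multiplicative (Fin 2 → ℤ)) ⋊[φ] Multiplicative ℤ) := by
  have hA' : (A : Matrix (Fin 2) (Fin 2) ℤ) = MM := hA
  rintro ⟨G₁, G₂, h1, h2, hcomm, hfin⟩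
  have key := key_lemma A hA' φ hφ
  -- if one factor is inside the kernel, so is the other
  have step : ∀ (H K : Subgroup ((Multiplicative (Fin 2 → ℤ)) ⋊[φ] Multiplicative ℤ)),
      (K : Set ((Multiplicative (Fin 2 → ℤ)) ⋊[φ] Multiplicative ℤ)).Infinite → (∀ g₁ ∈ H, ∀ g₂ ∈ K, g₁ * g₂ = g₂ * g₁) →
      (∀ g ∈ K, g.right = 1) → ∀ g ∈ H, g.right = 1 := by
    intro H K hKinf hcom hKk g hg
    obtain ⟨x, hx⟩ := (hKinf.diff (Set.finite_singleton 1)).nonempty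
    have hxK : x ∈ K := hx.1
    have hx1 : x ≠ 1 := by simpa using hx.2
    by_contra hg1
    have hxl := key g x (hcom g hg x hxK) (hKk x hxK) hg1
    exact hx1 (SemidirectProduct.ext hxl (hKk x hxK))
  by_cases hc1 : ∀ g ∈ G₁, SemidirectProduct.right g = 1
  · have hc2 : ∀ g ∈ G₂, SemidirectProduct.right g = 1 :=
      step G₂ G₁ h1 (fun a ha b hb => (hcomm b hb a ha).symm) hc1
    -- closure contained in kernel of rightHom
    have hNle : Subgroup.closure ((G₁ : Set _) ∪ (G₂ : Set _)) ≤
        (SemidirectProduct.rightHom :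
          (Multiplicative (Fin 2 → ℤ)) ⋊[φ] Multiplicative ℤ →* Multiplicative ℤ).ker := by
      rw [Subgroup.closure_le]
      rintro g (hg | hg)
      · exact hc1 g hg
      · exact hc2 g hg
    have hkidx : (SemidirectProduct.rightHom :
        (Multiplicative (Fin 2 → ℤ)) ⋊[φ] Multiplicative ℤ →* Multiplicative ℤ).ker.index = 0 := by
      rw [Subgroup.index_ker, MonoidHom.range_eq_top.2 SemidirectProduct.rightHom_surjective]
      exact (Nat.card_congr Subgroup.topEquiv.toEquiv).trans (Nat.card_eq_zero_of_infinite)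
    have hdvd := Subgroup.index_dvd_of_le hNle
    rw [hkidx] at hdvd
    exact hfin.index_ne_zero (zero_dvd_iff.mp hdvd)
  by_cases hc2 : ∀ g ∈ G₂, SemidirectProduct.right g = 1
  · exact hc1 (step G₁ G₂ h2 hcomm hc2)
  push_neg at hc1 hc2
  obtain ⟨a, haG, ham⟩ := hc1
  obtain ⟨b, hbG, hbk⟩ := hc2
  -- right-injectivity on G₁
  have inj1 : ∀ x ∈ G₁, ∀ y ∈ G₁, x.right = y.right → x = y := by
    intro x hx y hy hxy
    have c1 : Commute x b := hcomm x hx b hbG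
    have c2 : Commute y b := hcomm y hy b hbG
    have cz : Commute (x * y⁻¹) b := c1.mul_left c2.inv_left
    have h0 : (x * y⁻¹).right = 1 := by
      have : SemidirectProduct.rightHom (x * y⁻¹) = 1 := by
        rw [_root_.map_mul, _root_.map_inv]
        simp [SemidirectProduct.rightHom_eq_right, hxy]
      simpa [SemidirectProduct.rightHom_eq_right] using this
    have hzl := key b (x * y⁻¹) cz.symm h0 hbk
    have : x * y⁻¹ = 1 := SemidirectProduct.ext hzl h0
    exact mul_inv_eq_one.mp this
  have inj2 : ∀ x ∈ G₂, ∀ y ∈ G₂, x.right = y.right → x = y := by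
    intro x hx y hy hxy
    have c1 : Commute a x := hcomm a haG x hx
    have c2 : Commute a y := hcomm a haG y hy
    have cz : Commute (x * y⁻¹) a := (c1.symm).mul_left (c2.symm).inv_left
    have h0 : (x * y⁻¹).right = 1 := by
      have : SemidirectProduct.rightHom (x * y⁻¹) = 1 := by
        rw [_root_.map_mul, _root_.map_inv]
        simp [SemidirectProduct.rightHom_eq_right, hxy]
      simpa [SemidirectProduct.rightHom_eq_right] using this
    have hzl := key a (x * y⁻¹) cz.symm h0 ham
    have : x * y⁻¹ = 1 := SemidirectProduct.ext hzl h0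
    exact mul_inv_eq_one.mp this
  -- both factors abelian
  have hab1 : ∀ x ∈ G₁, ∀ y ∈ G₁, x * y = y * x := fun x hx y hy =>
    inj1 _ (mul_mem hx hy) _ (mul_mem hy hx)
      (by rw [SemidirectProduct.mul_right, SemidirectProduct.mul_right, mul_comm])
  have hab2 : ∀ x ∈ G₂, ∀ y ∈ G₂, x * y = y * x := fun x hx y hy =>
    inj2 _ (mul_mem hx hy) _ (mul_mem hy hx)
      (by rw [SemidirectProduct.mul_right, SemidirectProduct.mul_right, mul_comm])
  set S : Set ((Multiplicative (Fin 2 → ℤ)) ⋊[φ] Multiplicative ℤ) := ↑G₁ ∪ ↑G₂ with hS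
  set N := Subgroup.closure S with hN
  have hScomm : ∀ s ∈ S, ∀ t ∈ S, s * t = t * s := by
    rintro s (hs | hs) t (ht | ht)
    · exact hab1 s hs t ht
    · exact hcomm s hs t ht
    · exact (hcomm t ht s hs).symm
    · exact hab2 s hs t ht
  have hNcentS : N ≤ Subgroup.centralizer S :=
    (Subgroup.closure_le _).2 fun s hs =>
      Subgroup.mem_centralizer_iff.2 fun t ht => hScomm t ht s hs
  have hNcentN : N ≤ Subgroup.centralizer (N : Set _) :=
    (Subgroup.closure_le _).2 fun s hs =>
      Subgroup.mem_centralizer_iff.2 fun m hm =>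
        (Subgroup.mem_centralizer_iff.1 (hNcentS hm) s hs).symm
  have hNab : ∀ x ∈ N, ∀ y ∈ N, x * y = y * x := fun x hx y hy =>
    Subgroup.mem_centralizer_iff.1 (hNcentN hy) x hx
  -- a finite-index subgroup meets the kernel nontrivially
  obtain ⟨n, hn0, -, hmem⟩ := Subgroup.exists_pow_mem_of_index_ne_zero hfin.index_ne_zero
    (SemidirectProduct.inl (Multiplicative.ofAdd (![1,0] : Fin 2 → ℤ)))
  set z := (SemidirectProduct.inl (φ := φ) (Multiplicative.ofAdd (![1,0] : Fin 2 → ℤ))) ^ n with hz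
  have hz_right : z.right = 1 := by
    have : SemidirectProduct.rightHom z = 1 := by
      rw [hz, map_pow, SemidirectProduct.rightHom_inl, one_pow]
    simpa [SemidirectProduct.rightHom_eq_right] using this
  have haN : a ∈ N := Subgroup.subset_closure (Or.inl haG)
  have hzl := key a z (hNab a haN z hmem) hz_right ham
  have hz1 : z = 1 := SemidirectProduct.ext hzl hz_right
  rw [hz, ← map_pow] at hz1
  have hu : (Multiplicative.ofAdd (![1,0] : Fin 2 → ℤ) : Multiplicative (Fin 2 → ℤ)) ^ n = 1 := by
    apply SemidirectProduct.inl_injective (φ := φ)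
    simpa using hz1
  rw [← ofAdd_nsmul, ← ofAdd_zero, EmbeddingLike.apply_eq_iff_eq] at hu
  have := congrFun (show (n • (![1,0] : Fin 2 → ℤ) : Fin 2 → ℤ) = 0 by exact_mod_cast hu) 0
  simp at this
  omega
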